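/- Let X, Y ∈ ℝ^{L×M} with L ≥ M, and suppose the M-th largest singular value of X satisfies σ_M(X) > ‖Y‖ (spectral norm). Then both XᵀX and (X+Y)ᵀ(X+Y) are invertible and ‖Π_o(X+Y) − Π_o(X)‖_F ≤ (1+√2) · ‖Y‖_F / (σ_M(X) − ‖Y‖), where Π_o(Z) = Z(ZᵀZ)^{−1/2}. -/

import Mathlib

open Matrix BigOperators

theorem Matrix.isHermitian_transpose_mul_self {m n : Type*} [Fintype m] (A : Matrix m n ℝ) :
    (Aᵀ * A).IsHermitian := by
  simpa [Matrix.conjTranspose_eq_transpose_of_trivial] using Matrix.isHermitian_conjTranspose_mul_self A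

noncomputable def Matrix.PosSemidef.sqrt {n : Type*} [Fintype n] [DecidableEq n]
    {A : Matrix n n ℝ} (hA : A.PosSemidef) : Matrix n n ℝ :=
  hA.1.eigenvectorUnitary.1 * diagonal ((↑) ∘ (√·) ∘ hA.1.eigenvalues) *
    (star hA.1.eigenvectorUnitary : Matrix n n ℝ)

/-- Frobenius norm of a real matrix. -/
noncomputable def frobNorm {a b : ℕ} (X : Matrix (Fin a) (Fin b) ℝ) : ℝ :=
  Real.sqrt (∑ i, ∑ j, (X i j) ^ 2)

/-- Spectral (operator) norm of a real matrix. -/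
noncomputable def specNorm {a b : ℕ} (X : Matrix (Fin a) (Fin b) ℝ) : ℝ :=
  ‖LinearMap.toContinuousLinearMap (Matrix.toEuclideanLin X)‖

/-- `singVal X k`: the `k`-th largest singular value of `X` (1-indexed),
i.e. the `k`-th largest square root of an eigenvalue of `Xᴴ X`. -/
noncomputable def singVal {a b : ℕ} (X : Matrix (Fin a) (Fin b) ℝ) (k : ℕ) : ℝ :=
  ((((Finset.univ : Finset (Fin b)).val.map
      (fun i => Real.sqrt ((Matrix.isHermitian_transpose_mul_self X).eigenvalues i))).sort
      (· ≤ ·)).getD (b - k) 0)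

/-- The positive semidefinite square root of a positive semidefinite matrix
(junk value `0` otherwise). -/
noncomputable def matSqrt {d : ℕ} (A : Matrix (Fin d) (Fin d) ℝ) : Matrix (Fin d) (Fin d) ℝ :=
  open scoped Classical in
  if h : A.PosSemidef then h.sqrt else 0

/-- `Πₒ(X) = X (XᵀX)^{-1/2}`, the projection onto the nearest orthonormal-column matrix. -/
noncomputable def Pio {a b : ℕ} (X : Matrix (Fin a) (Fin b) ℝ) : Matrix (Fin a) (Fin b) ℝ :=
  X * (matSqrt (Xᵀ * X))⁻¹

section helpers
open scoped Matrix.Norms.L2Operator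

lemma dot_self_nonneg {n : ℕ} (v : Fin n → ℝ) : 0 ≤ v ⬝ᵥ v :=
  Finset.sum_nonneg fun _ _ => mul_self_nonneg _

lemma euc_norm_eq {n : ℕ} (v : EuclideanSpace ℝ (Fin n)) :
    ‖v‖ = Real.sqrt ((v : Fin n → ℝ) ⬝ᵥ (v : Fin n → ℝ)) := by
  rw [EuclideanSpace.norm_eq]
  congr 1
  simp [dotProduct, Real.norm_eq_abs, sq_abs, sq]

/-- operator norm bound from quadratic form bound -/
lemma opnorm_le_of_dot {m n : ℕ} (A : Matrix (Fin m) (Fin n) ℝ) {c : ℝ} (hc : 0 ≤ c)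
    (h : ∀ v : Fin n → ℝ, (A *ᵥ v) ⬝ᵥ (A *ᵥ v) ≤ c ^ 2 * (v ⬝ᵥ v)) : ‖A‖ ≤ c := by
  show ‖LinearMap.toContinuousLinearMap (Matrix.toEuclideanLin A)‖ ≤ c
  refine ContinuousLinearMap.opNorm_le_bound _ hc fun x => ?_
  have h1 : ‖(LinearMap.toContinuousLinearMap (Matrix.toEuclideanLin A)) x‖
      = Real.sqrt ((A *ᵥ (x : Fin n → ℝ)) ⬝ᵥ (A *ᵥ (x : Fin n → ℝ))) :=
    euc_norm_eq _
  rw [h1, euc_norm_eq]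
  calc Real.sqrt ((A *ᵥ (x : Fin n → ℝ)) ⬝ᵥ (A *ᵥ (x : Fin n → ℝ)))
      ≤ Real.sqrt (c ^ 2 * ((x : Fin n → ℝ) ⬝ᵥ (x : Fin n → ℝ))) := Real.sqrt_le_sqrt (h _)
    _ = c * Real.sqrt ((x : Fin n → ℝ) ⬝ᵥ (x : Fin n → ℝ)) := by
        rw [Real.sqrt_mul (by positivity), Real.sqrt_sq hc]

lemma dot_mulVec_le_opnorm {m n : ℕ} (A : Matrix (Fin m) (Fin n) ℝ) (v : Fin n → ℝ) :
    (A *ᵥ v) ⬝ᵥ (A *ᵥ v) ≤ ‖A‖ ^ 2 * (v ⬝ᵥ v) := by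
  have h4 : Real.sqrt ((A *ᵥ v) ⬝ᵥ (A *ᵥ v)) ≤ ‖A‖ * Real.sqrt (v ⬝ᵥ v) := by
    have := Matrix.l2_opNorm_mulVec A ((WithLp.equiv 2 (Fin n → ℝ)).symm v)
    rw [euc_norm_eq, euc_norm_eq] at this
    exact this
  nlinarith [Real.sq_sqrt (dot_self_nonneg (A *ᵥ v)), Real.sq_sqrt (dot_self_nonneg v),
    Real.sqrt_nonneg ((A *ᵥ v) ⬝ᵥ (A *ᵥ v)), Real.sqrt_nonneg (v ⬝ᵥ v), norm_nonneg A]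

section rayleigh
variable {d : ℕ} {H : Matrix (Fin d) (Fin d) ℝ} (hH : H.IsHermitian)

lemma dot_transpose_mulVec_self (U : Matrix (Fin d) (Fin d) ℝ)
    (hU : U * Uᵀ = 1) (v : Fin d → ℝ) : (Uᵀ *ᵥ v) ⬝ᵥ (Uᵀ *ᵥ v) = v ⬝ᵥ v := by
  rw [Matrix.mulVec_transpose, ← Matrix.dotProduct_mulVec, ← Matrix.mulVec_transpose U v,
    Matrix.mulVec_mulVec, hU, Matrix.one_mulVec]

lemma star_unitary_eq : ((star hH.eigenvectorUnitary : Matrix.unitaryGroup (Fin d) ℝ) :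
    Matrix (Fin d) (Fin d) ℝ) = ((hH.eigenvectorUnitary : Matrix (Fin d) (Fin d) ℝ))ᵀ := by
  rw [Unitary.coe_star, Matrix.star_eq_conjTranspose,
    Matrix.conjTranspose_eq_transpose_of_trivial]

lemma unitary_mul_transpose_self :
    (hH.eigenvectorUnitary : Matrix (Fin d) (Fin d) ℝ) *
      (hH.eigenvectorUnitary : Matrix (Fin d) (Fin d) ℝ)ᵀ = 1 := by
  have := (Matrix.mem_unitaryGroup_iff).mp (hH.eigenvectorUnitary).2
  rwa [Matrix.star_eq_conjTranspose, Matrix.conjTranspose_eq_transpose_of_trivial] at this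

lemma quadform_eigen_expand (v : Fin d → ℝ) :
    v ⬝ᵥ (H *ᵥ v) = ∑ i, hH.eigenvalues i *
      (((hH.eigenvectorUnitary : Matrix (Fin d) (Fin d) ℝ)ᵀ *ᵥ v) i) ^ 2 := by
  set U := (hH.eigenvectorUnitary : Matrix (Fin d) (Fin d) ℝ) with hUdef
  have hsp := hH.spectral_theorem
  have hofr : (RCLike.ofReal ∘ hH.eigenvalues : Fin d → ℝ) = hH.eigenvalues := by
    funext i; simp
  rw [hofr, Unitary.conjStarAlgAut_apply] at hsp
  have hstar : (star U : Matrix (Fin d) (Fin d) ℝ) = Uᵀ := by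
    rw [Matrix.star_eq_conjTranspose, Matrix.conjTranspose_eq_transpose_of_trivial]
  rw [hstar] at hsp
  conv_lhs => rw [hsp]
  rw [← Matrix.mulVec_mulVec, ← Matrix.mulVec_mulVec, Matrix.dotProduct_mulVec (A := U),
    ← Matrix.mulVec_transpose]
  simp only [dotProduct, Matrix.mulVec_diagonal]
  exact Finset.sum_congr rfl fun i _ => by ring

lemma rayleigh_lb {c : ℝ} (hc : ∀ i, c ≤ hH.eigenvalues i) (v : Fin d → ℝ) :
    c * (v ⬝ᵥ v) ≤ v ⬝ᵥ (H *ᵥ v) := by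
  rw [quadform_eigen_expand hH v,
    ← dot_transpose_mulVec_self (hH.eigenvectorUnitary : Matrix (Fin d) (Fin d) ℝ)
      (unitary_mul_transpose_self hH) v]
  set w := (hH.eigenvectorUnitary : Matrix (Fin d) (Fin d) ℝ)ᵀ *ᵥ v
  rw [dotProduct, Finset.mul_sum]
  exact Finset.sum_le_sum fun i _ => by
    have := hc i; nlinarith [sq_nonneg (w i)]

lemma rayleigh_ub {c : ℝ} (hc : ∀ i, hH.eigenvalues i ≤ c) (v : Fin d → ℝ) :
    v ⬝ᵥ (H *ᵥ v) ≤ c * (v ⬝ᵥ v) := by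
  rw [quadform_eigen_expand hH v,
    ← dot_transpose_mulVec_self (hH.eigenvectorUnitary : Matrix (Fin d) (Fin d) ℝ)
      (unitary_mul_transpose_self hH) v]
  set w := (hH.eigenvectorUnitary : Matrix (Fin d) (Fin d) ℝ)ᵀ *ᵥ v
  rw [dotProduct, Finset.mul_sum]
  exact Finset.sum_le_sum fun i _ => by
    have := hc i; nlinarith [sq_nonneg (w i)]

lemma eigen_lb_of_rayleigh {c : ℝ}
    (h : ∀ v : Fin d → ℝ, c * (v ⬝ᵥ v) ≤ v ⬝ᵥ (H *ᵥ v)) (i : Fin d) :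
    c ≤ hH.eigenvalues i := by
  have hnorm : ‖hH.eigenvectorBasis i‖ = 1 := hH.eigenvectorBasis.orthonormal.1 i
  have h1 := (euc_norm_eq (hH.eigenvectorBasis i)).symm
  rw [hnorm] at h1
  have hdot : (hH.eigenvectorBasis i : Fin d → ℝ) ⬝ᵥ (hH.eigenvectorBasis i : Fin d → ℝ)
      = 1 := by
    nlinarith [Real.sq_sqrt (dot_self_nonneg (hH.eigenvectorBasis i : Fin d → ℝ)), h1]
  have key := h (hH.eigenvectorBasis i : Fin d → ℝ)
  have hmv : H *ᵥ (hH.eigenvectorBasis i : Fin d → ℝ)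
      = hH.eigenvalues i • (hH.eigenvectorBasis i : Fin d → ℝ) := hH.mulVec_eigenvectorBasis i
  rw [hmv, dotProduct_smul, hdot] at key
  simpa using key
end rayleigh

noncomputable def fsq {a b : ℕ} (X : Matrix (Fin a) (Fin b) ℝ) : ℝ := ∑ i, ∑ j, (X i j) ^ 2

lemma fsq_nonneg {a b : ℕ} (X : Matrix (Fin a) (Fin b) ℝ) : 0 ≤ fsq X :=
  Finset.sum_nonneg fun _ _ => Finset.sum_nonneg fun _ _ => sq_nonneg _

lemma fsq_transpose {a b : ℕ} (X : Matrix (Fin a) (Fin b) ℝ) : fsq Xᵀ = fsq X := by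
  simp only [fsq, Matrix.transpose_apply]
  exact Finset.sum_comm

lemma fsq_row_dot {a b : ℕ} (X : Matrix (Fin a) (Fin b) ℝ) : fsq X = ∑ i, (X i) ⬝ᵥ (X i) := by
  unfold fsq; exact Finset.sum_congr rfl fun i _ => by simp [dotProduct, sq]

lemma trace_mul_transpose_eq {d e : ℕ} (M N : Matrix (Fin d) (Fin e) ℝ) :
    Matrix.trace (M * Nᵀ) = ∑ i, ∑ j, M i j * N i j := by
  simp [Matrix.trace, Matrix.mul_apply, Matrix.diag]

lemma fsq_eq_trace {a b : ℕ} (X : Matrix (Fin a) (Fin b) ℝ) :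
    fsq X = Matrix.trace (X * Xᵀ) := by
  rw [trace_mul_transpose_eq]; unfold fsq
  exact Finset.sum_congr rfl fun i _ => Finset.sum_congr rfl fun j _ => (sq (X i j)).symm ▸ by ring

lemma sum_mul_le_sqrt_fsq {a b : ℕ} (A B : Matrix (Fin a) (Fin b) ℝ) :
    ∑ i, ∑ j, A i j * B i j ≤ Real.sqrt (fsq A) * Real.sqrt (fsq B) := by
  have h1 : (∑ p : Fin a × Fin b, A p.1 p.2 * B p.1 p.2) ^ 2 ≤
      (∑ p : Fin a × Fin b, (A p.1 p.2) ^ 2) * (∑ p : Fin a × Fin b, (B p.1 p.2) ^ 2) := by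
    exact Finset.sum_mul_sq_le_sq_mul_sq Finset.univ _ _
  rw [Fintype.sum_prod_type] at h1
  have hA : (∑ p : Fin a × Fin b, (A p.1 p.2) ^ 2) = fsq A := by
    rw [Fintype.sum_prod_type]; rfl
  have hB : (∑ p : Fin a × Fin b, (B p.1 p.2) ^ 2) = fsq B := by
    rw [Fintype.sum_prod_type]; rfl
  rw [hA, hB] at h1
  have h2 : ∑ i, ∑ j, A i j * B i j ≤ |∑ i, ∑ j, A i j * B i j| := le_abs_self _
  calc ∑ i, ∑ j, A i j * B i j ≤ |∑ i, ∑ j, A i j * B i j| := h2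
    _ = Real.sqrt ((∑ i, ∑ j, A i j * B i j) ^ 2) := (Real.sqrt_sq_eq_abs _).symm
    _ ≤ Real.sqrt (fsq A * fsq B) := Real.sqrt_le_sqrt h1
    _ = Real.sqrt (fsq A) * Real.sqrt (fsq B) := Real.sqrt_mul (fsq_nonneg A) _

lemma frob_triangle {a b : ℕ} (A B : Matrix (Fin a) (Fin b) ℝ) :
    Real.sqrt (fsq (A + B)) ≤ Real.sqrt (fsq A) + Real.sqrt (fsq B) := by
  have hexp : fsq (A + B) = fsq A + 2 * (∑ i, ∑ j, A i j * B i j) + fsq B := by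
    simp only [fsq, Matrix.add_apply, add_sq, Finset.sum_add_distrib, Finset.mul_sum]
    ring_nf
  have hcs := sum_mul_le_sqrt_fsq A B
  have h1 : fsq (A + B) ≤ (Real.sqrt (fsq A) + Real.sqrt (fsq B)) ^ 2 := by
    rw [hexp]
    nlinarith [Real.sq_sqrt (fsq_nonneg A), Real.sq_sqrt (fsq_nonneg B)]
  calc Real.sqrt (fsq (A + B)) ≤ Real.sqrt ((Real.sqrt (fsq A) + Real.sqrt (fsq B)) ^ 2) :=
        Real.sqrt_le_sqrt h1
    _ = Real.sqrt (fsq A) + Real.sqrt (fsq B) := Real.sqrt_sq (by positivity)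

lemma frob_mul_right {a b c : ℕ} (M : Matrix (Fin a) (Fin b) ℝ) (W : Matrix (Fin b) (Fin c) ℝ) :
    Real.sqrt (fsq (M * W)) ≤ Real.sqrt (fsq M) * ‖W‖ := by
  have hrow : ∀ i, (M * W) i = Wᵀ *ᵥ (M i) := by
    intro i; funext j; simp [Matrix.mul_apply, Matrix.mulVec, dotProduct, mul_comm]
  have h1 : fsq (M * W) ≤ ‖Wᵀ‖ ^ 2 * fsq M := by
    rw [fsq_row_dot, fsq_row_dot, Finset.mul_sum]
    refine Finset.sum_le_sum fun i _ => ?_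
    rw [hrow i]
    exact dot_mulVec_le_opnorm _ _
  have hWt : ‖Wᵀ‖ = ‖W‖ := by
    rw [← Matrix.conjTranspose_eq_transpose_of_trivial, Matrix.l2_opNorm_conjTranspose]
  rw [hWt] at h1
  calc Real.sqrt (fsq (M * W)) ≤ Real.sqrt (‖W‖ ^ 2 * fsq M) := Real.sqrt_le_sqrt h1
    _ = ‖W‖ * Real.sqrt (fsq M) := by rw [Real.sqrt_mul (by positivity), Real.sqrt_sq (norm_nonneg _)]
    _ = Real.sqrt (fsq M) * ‖W‖ := mul_comm _ _

lemma frob_mul_left {a b c : ℕ} (Q : Matrix (Fin a) (Fin b) ℝ) (M : Matrix (Fin b) (Fin c) ℝ) :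
    Real.sqrt (fsq (Q * M)) ≤ ‖Q‖ * Real.sqrt (fsq M) := by
  have h1 : fsq (Q * M) = fsq ((Q * M)ᵀ) := (fsq_transpose _).symm
  rw [h1, Matrix.transpose_mul]
  have h2 := frob_mul_right Mᵀ Qᵀ
  rw [fsq_transpose] at h2
  have hQt : ‖Qᵀ‖ = ‖Q‖ := by
    rw [← Matrix.conjTranspose_eq_transpose_of_trivial, Matrix.l2_opNorm_conjTranspose]
  rw [hQt] at h2
  linarith [h2]

end helpers

section ay
open Matrix
open scoped Matrix.Norms.L2Operator

lemma dot_self_mulVec {m n : ℕ} (M : Matrix (Fin m) (Fin n) ℝ) (v : Fin n → ℝ) :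
    (M *ᵥ v) ⬝ᵥ (M *ᵥ v) = v ⬝ᵥ ((Mᵀ * M) *ᵥ v) := by
  rw [Matrix.dotProduct_mulVec, ← Matrix.mulVec_transpose, Matrix.mulVec_mulVec,
    dotProduct_comm]

/-- matrix with 0/1 diagonal gram implies operator norm ≤ 1 -/
lemma opnorm_le_one_of_gram_diag {m n : ℕ} (W : Matrix (Fin m) (Fin n) ℝ) (g : Fin n → ℝ)
    (hg : ∀ j, g j = 0 ∨ g j = 1) (hW : Wᵀ * W = Matrix.diagonal g) : ‖W‖ ≤ 1 := by
  refine opnorm_le_of_dot W zero_le_one fun v => ?_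
  rw [dot_self_mulVec, hW, one_pow, one_mul]
  simp only [dotProduct, Matrix.mulVec_diagonal]
  refine Finset.sum_le_sum fun j _ => ?_
  rcases hg j with h | h <;> rw [h] <;> nlinarith [sq_nonneg (v j)]

/-- real spectral theorem, transposed form -/
lemma spectral_real {d : ℕ} {H : Matrix (Fin d) (Fin d) ℝ} (hH : H.IsHermitian) :
    H = (hH.eigenvectorUnitary : Matrix (Fin d) (Fin d) ℝ) * Matrix.diagonal hH.eigenvalues *
      (hH.eigenvectorUnitary : Matrix (Fin d) (Fin d) ℝ)ᵀ := by
  have hsp := hH.spectral_theorem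
  have hofr : (RCLike.ofReal ∘ hH.eigenvalues : Fin d → ℝ) = hH.eigenvalues := by
    funext i; simp
  rw [hofr, Unitary.conjStarAlgAut_apply] at hsp
  rwa [Matrix.star_eq_conjTranspose, Matrix.conjTranspose_eq_transpose_of_trivial] at hsp

lemma transpose_unitary_mul_self {d : ℕ} {H : Matrix (Fin d) (Fin d) ℝ} (hH : H.IsHermitian) :
    (hH.eigenvectorUnitary : Matrix (Fin d) (Fin d) ℝ)ᵀ *
      (hH.eigenvectorUnitary : Matrix (Fin d) (Fin d) ℝ) = 1 := by
  have := (Unitary.star_mul_self_of_mem (hH.eigenvectorUnitary).2)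
  rwa [Matrix.star_eq_conjTranspose, Matrix.conjTranspose_eq_transpose_of_trivial] at this

lemma trace_diag_conj {d : ℕ} (p q : Fin d → ℝ) (G : Matrix (Fin d) (Fin d) ℝ) :
    Matrix.trace (Matrix.diagonal p * G * Matrix.diagonal q * Gᵀ)
      = ∑ i, ∑ j, p i * q j * (G i j) ^ 2 := by
  rw [trace_mul_transpose_eq]
  refine Finset.sum_congr rfl fun i _ => Finset.sum_congr rfl fun j _ => ?_
  rw [Matrix.mul_diagonal, Matrix.diagonal_mul]
  ring

lemma key_scalar (p q G K d e : ℝ) (hp : 0 ≤ p) (hq : 0 ≤ q) (hK : |K| ≤ p * q)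
    (hd : d = if p = 0 then 0 else p⁻¹) (he : e = if q = 0 then 0 else q⁻¹) :
    4 * (K * G) ≤ 2 * (p * q * G ^ 2) + (d * K) ^ 2 + (K * e) ^ 2 := by
  rcases eq_or_lt_of_le hp with h0 | hp'
  · have hK0 : K = 0 := by
      have : |K| ≤ 0 := by rw [← h0] at hK; simpa using hK
      simpa using le_antisymm this (abs_nonneg K)
    simp [hK0]
    positivity
  rcases eq_or_lt_of_le hq with h0q | hq'
  · have hK0 : K = 0 := by
      have : |K| ≤ 0 := by rw [← h0q] at hK; simpa using hK
      simpa using le_antisymm this (abs_nonneg K)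
    simp [hK0]
    positivity
  rw [if_neg (ne_of_gt hp')] at hd
  rw [if_neg (ne_of_gt hq')] at he
  subst hd he
  have h1 : p * p⁻¹ = 1 := mul_inv_cancel₀ (ne_of_gt hp')
  have h2 : q * q⁻¹ = 1 := mul_inv_cancel₀ (ne_of_gt hq')
  have key : 4 * (K * G) * (p ^ 2 * q ^ 2) ≤
      (2 * (p * q * G ^ 2) + (p⁻¹ * K) ^ 2 + (K * q⁻¹) ^ 2) * (p ^ 2 * q ^ 2) := by
    have e1 : (p⁻¹ * K) ^ 2 * (p ^ 2 * q ^ 2) = K ^ 2 * q ^ 2 := by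
      field_simp
    have e2 : (K * q⁻¹) ^ 2 * (p ^ 2 * q ^ 2) = K ^ 2 * p ^ 2 := by
      field_simp
    rw [add_mul, add_mul, e1, e2]
    nlinarith [mul_nonneg (mul_nonneg hp hq) (sq_nonneg (p * q * G - K)),
      sq_nonneg (K * p - K * q), mul_pos hp' hq']
  have hpq2 : (0:ℝ) < p ^ 2 * q ^ 2 := by positivity
  exact le_of_mul_le_mul_right key hpq2

end ay

section aymain
open Matrix
open scoped Matrix.Norms.L2Operator

lemma opnorm_transpose {a b : ℕ} (W : Matrix (Fin a) (Fin b) ℝ) : ‖Wᵀ‖ = ‖W‖ := by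
  rw [← Matrix.conjTranspose_eq_transpose_of_trivial, Matrix.l2_opNorm_conjTranspose]

lemma le_of_sqrt_le_sqrt {x y : ℝ} (hx : 0 ≤ x) (hy : 0 ≤ y)
    (h : Real.sqrt x ≤ Real.sqrt y) : x ≤ y := by
  nlinarith [Real.sq_sqrt hx, Real.sq_sqrt hy, Real.sqrt_nonneg x, Real.sqrt_nonneg y]

lemma conj_mul_conj {d : ℕ} (U X Y : Matrix (Fin d) (Fin d) ℝ) (hU : Uᵀ * U = 1) :
    (U * X * Uᵀ) * (U * Y * Uᵀ) = U * (X * Y) * Uᵀ := by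
  simp only [Matrix.mul_assoc]
  rw [← Matrix.mul_assoc Uᵀ U, hU, Matrix.one_mul]

lemma trace_conj_eq {d : ℕ} (U X : Matrix (Fin d) (Fin d) ℝ) (hU : Uᵀ * U = 1) :
    Matrix.trace (U * X * Uᵀ) = Matrix.trace X := by
  rw [Matrix.trace_mul_cycle, hU, Matrix.one_mul]

theorem ay_main {L M : ℕ} (A B : Matrix (Fin L) (Fin M) ℝ) {P Q : Matrix (Fin M) (Fin M) ℝ}
    (hP : P.PosSemidef) (hQ : Q.PosSemidef) (hP2 : P * P = Aᵀ * A) (hQ2 : Q * Q = Bᵀ * B) :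
    fsq (P - Q) ≤ 2 * fsq (A - B) := by
  classical
  have hPh : P.IsHermitian := hP.1
  have hQh : Q.IsHermitian := hQ.1
  set p : Fin M → ℝ := hPh.eigenvalues with hp_def
  set q : Fin M → ℝ := hQh.eigenvalues with hq_def
  set U : Matrix (Fin M) (Fin M) ℝ := (hPh.eigenvectorUnitary : Matrix (Fin M) (Fin M) ℝ)
  set V : Matrix (Fin M) (Fin M) ℝ := (hQh.eigenvectorUnitary : Matrix (Fin M) (Fin M) ℝ)
  have hpnn : ∀ i, 0 ≤ p i := fun i => hP.eigenvalues_nonneg i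
  have hqnn : ∀ j, 0 ≤ q j := fun j => hQ.eigenvalues_nonneg j
  have hUo : Uᵀ * U = 1 := transpose_unitary_mul_self hPh
  have hUo' : U * Uᵀ = 1 := unitary_mul_transpose_self hPh
  have hVo : Vᵀ * V = 1 := transpose_unitary_mul_self hQh
  have hVo' : V * Vᵀ = 1 := unitary_mul_transpose_self hQh
  have specP : P = U * Matrix.diagonal p * Uᵀ := spectral_real hPh
  have specQ : Q = V * Matrix.diagonal q * Vᵀ := spectral_real hQh
  set Γ : Matrix (Fin M) (Fin M) ℝ := Uᵀ * V with hΓ_def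
  set K : Matrix (Fin M) (Fin M) ℝ := (A * U)ᵀ * (B * V) with hK_def
  have hPt : Pᵀ = P := by
    rw [← Matrix.conjTranspose_eq_transpose_of_trivial]; exact hPh
  have hQt : Qᵀ = Q := by
    rw [← Matrix.conjTranspose_eq_transpose_of_trivial]; exact hQh
  -- trace identities
  have trPP : Matrix.trace (P * P) = ∑ i, p i ^ 2 := by
    rw [specP, conj_mul_conj U _ _ hUo, trace_conj_eq _ _ hUo,
      Matrix.diagonal_mul_diagonal, Matrix.trace_diagonal]
    exact Finset.sum_congr rfl fun i _ => (sq (p i)).symm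
  have trQQ : Matrix.trace (Q * Q) = ∑ j, q j ^ 2 := by
    rw [specQ, conj_mul_conj V _ _ hVo, trace_conj_eq _ _ hVo,
      Matrix.diagonal_mul_diagonal, Matrix.trace_diagonal]
    exact Finset.sum_congr rfl fun j _ => (sq (q j)).symm
  have hΓt : Γᵀ = Vᵀ * U := by
    rw [hΓ_def, Matrix.transpose_mul, Matrix.transpose_transpose]
  have trPQ : Matrix.trace (P * Q) = ∑ i, ∑ j, p i * q j * (Γ i j) ^ 2 := by
    calc Matrix.trace (P * Q)
        = Matrix.trace (U * (Matrix.diagonal p * (Uᵀ * (V * (Matrix.diagonal q * Vᵀ))))) := by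
          rw [specP, specQ]; simp only [Matrix.mul_assoc]
      _ = Matrix.trace ((Matrix.diagonal p * (Uᵀ * (V * (Matrix.diagonal q * Vᵀ)))) * U) :=
          Matrix.trace_mul_comm _ _
      _ = Matrix.trace (Matrix.diagonal p * Γ * Matrix.diagonal q * Γᵀ) := by
          rw [hΓt, hΓ_def]; simp only [Matrix.mul_assoc]
      _ = ∑ i, ∑ j, p i * q j * (Γ i j) ^ 2 := trace_diag_conj p q Γ
  have trAB : Matrix.trace (Aᵀ * B) = ∑ i, ∑ j, K i j * Γ i j := by
    calc Matrix.trace (Aᵀ * B)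
        = Matrix.trace (Aᵀ * B * (U * Uᵀ)) := by rw [hUo', Matrix.mul_one]
      _ = Matrix.trace ((Aᵀ * (B * U)) * Uᵀ) := by simp only [Matrix.mul_assoc]
      _ = Matrix.trace (Uᵀ * (Aᵀ * (B * U))) := Matrix.trace_mul_comm _ _
      _ = Matrix.trace (Uᵀ * (Aᵀ * (B * (V * (Vᵀ * U))))) := by
          rw [← Matrix.mul_assoc V Vᵀ U, hVo', Matrix.one_mul]
      _ = Matrix.trace (K * Γᵀ) := by
          rw [hK_def, hΓt, Matrix.transpose_mul]; simp only [Matrix.mul_assoc]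
      _ = ∑ i, ∑ j, K i j * Γ i j := trace_mul_transpose_eq K Γ
  -- gram identities
  have gramA : (A * U)ᵀ * (A * U) = Matrix.diagonal (fun i => p i ^ 2) := by
    rw [Matrix.transpose_mul]
    rw [show Uᵀ * Aᵀ * (A * U) = Uᵀ * (Aᵀ * A) * U from by simp only [Matrix.mul_assoc]]
    rw [← hP2, specP, conj_mul_conj U _ _ hUo]
    rw [show Uᵀ * (U * (Matrix.diagonal p * Matrix.diagonal p) * Uᵀ) * U
        = (Uᵀ * U) * (Matrix.diagonal p * Matrix.diagonal p) * (Uᵀ * U) from by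
      simp only [Matrix.mul_assoc], hUo, Matrix.one_mul, Matrix.mul_one,
      Matrix.diagonal_mul_diagonal]
    exact congrArg Matrix.diagonal (funext fun i => (sq (p i)).symm)
  have gramB : (B * V)ᵀ * (B * V) = Matrix.diagonal (fun j => q j ^ 2) := by
    rw [Matrix.transpose_mul]
    rw [show Vᵀ * Bᵀ * (B * V) = Vᵀ * (Bᵀ * B) * V from by simp only [Matrix.mul_assoc]]
    rw [← hQ2, specQ, conj_mul_conj V _ _ hVo]
    rw [show Vᵀ * (V * (Matrix.diagonal q * Matrix.diagonal q) * Vᵀ) * V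
        = (Vᵀ * V) * (Matrix.diagonal q * Matrix.diagonal q) * (Vᵀ * V) from by
      simp only [Matrix.mul_assoc], hVo, Matrix.one_mul, Matrix.mul_one,
      Matrix.diagonal_mul_diagonal]
    exact congrArg Matrix.diagonal (funext fun j => (sq (q j)).symm)
  -- column norms
  have colA : ∀ i, ∑ k, ((A * U) k i) ^ 2 = p i ^ 2 := by
    intro i
    have h0 : ((A * U)ᵀ * (A * U)) i i = Matrix.diagonal (fun i => p i ^ 2) i i := by
      rw [gramA]
    rw [Matrix.diagonal_apply_eq] at h0
    rw [← h0, Matrix.mul_apply]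
    exact Finset.sum_congr rfl fun k _ => by rw [Matrix.transpose_apply, sq]
  have colB : ∀ j, ∑ k, ((B * V) k j) ^ 2 = q j ^ 2 := by
    intro j
    have h0 : ((B * V)ᵀ * (B * V)) j j = Matrix.diagonal (fun j => q j ^ 2) j j := by
      rw [gramB]
    rw [Matrix.diagonal_apply_eq] at h0
    rw [← h0, Matrix.mul_apply]
    exact Finset.sum_congr rfl fun k _ => by rw [Matrix.transpose_apply, sq]
  -- Cauchy-Schwarz entrywise
  have hKent : ∀ i j, |K i j| ≤ p i * q j := by
    intro i j
    have hKapp : K i j = ∑ k, (A * U) k i * (B * V) k j := by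
      rw [hK_def, Matrix.mul_apply]
      exact Finset.sum_congr rfl fun k _ => by rw [Matrix.transpose_apply]
    have hcs := Finset.sum_mul_sq_le_sq_mul_sq Finset.univ (fun k => (A * U) k i)
      (fun k => (B * V) k j)
    rw [colA i, colB j] at hcs
    rw [← hKapp] at hcs
    have h1 : |K i j| = Real.sqrt ((K i j) ^ 2) := (Real.sqrt_sq_eq_abs _).symm
    rw [h1]
    calc Real.sqrt ((K i j) ^ 2) ≤ Real.sqrt ((p i * q j) ^ 2) := by
          apply Real.sqrt_le_sqrt; nlinarith [hcs]
      _ = |p i * q j| := Real.sqrt_sq_eq_abs _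
      _ = p i * q j := abs_of_nonneg (mul_nonneg (hpnn i) (hqnn j))
  -- pseudoinverses
  set d : Fin M → ℝ := fun i => if p i = 0 then 0 else (p i)⁻¹ with hd_def
  set e : Fin M → ℝ := fun j => if q j = 0 then 0 else (q j)⁻¹ with he_def
  -- Bessel bounds
  have besselRow : (∑ i, ∑ j, (K i j * e j) ^ 2) ≤ ∑ i, p i ^ 2 := by
    have hWgram : ((B * V) * Matrix.diagonal e)ᵀ * ((B * V) * Matrix.diagonal e)
        = Matrix.diagonal (fun j => if q j = 0 then (0:ℝ) else 1) := by
      rw [Matrix.transpose_mul, Matrix.diagonal_transpose,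
        show Matrix.diagonal e * (B * V)ᵀ * ((B * V) * Matrix.diagonal e)
          = Matrix.diagonal e * ((B * V)ᵀ * (B * V)) * Matrix.diagonal e from by
          simp only [Matrix.mul_assoc], gramB, Matrix.diagonal_mul_diagonal,
        Matrix.diagonal_mul_diagonal]
      refine congrArg Matrix.diagonal (funext fun j => ?_)
      by_cases h : q j = 0
      · simp [he_def, h]
      · rw [he_def]
        simp only [if_neg h]
        field_simp
    have hWnorm : ‖(B * V) * Matrix.diagonal e‖ ≤ 1 :=
      opnorm_le_one_of_gram_diag _ _ (fun j => by by_cases h : q j = 0 <;> simp [h]) hWgram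
    have hKe : K * Matrix.diagonal e = (A * U)ᵀ * ((B * V) * Matrix.diagonal e) := by
      rw [hK_def]; simp only [Matrix.mul_assoc]
    have hfsqAU : fsq ((A * U)ᵀ) = ∑ i, p i ^ 2 := by
      rw [fsq_transpose, fsq_eq_trace, Matrix.trace_mul_comm, gramA, Matrix.trace_diagonal]
    have hb := frob_mul_right ((A * U)ᵀ) ((B * V) * Matrix.diagonal e)
    rw [← hKe, hfsqAU] at hb
    have hb2 : Real.sqrt (fsq (K * Matrix.diagonal e)) ≤ Real.sqrt (∑ i, p i ^ 2) := by
      calc Real.sqrt (fsq (K * Matrix.diagonal e))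
          ≤ Real.sqrt (∑ i, p i ^ 2) * ‖(B * V) * Matrix.diagonal e‖ := hb
        _ ≤ Real.sqrt (∑ i, p i ^ 2) * 1 :=
            mul_le_mul_of_nonneg_left hWnorm (Real.sqrt_nonneg _)
        _ = Real.sqrt (∑ i, p i ^ 2) := mul_one _
    have hb3 := le_of_sqrt_le_sqrt (fsq_nonneg _)
      (Finset.sum_nonneg fun i _ => sq_nonneg _) hb2
    have hent : fsq (K * Matrix.diagonal e) = ∑ i, ∑ j, (K i j * e j) ^ 2 := by
      unfold fsq
      exact Finset.sum_congr rfl fun i _ => Finset.sum_congr rfl fun j _ => by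
        rw [Matrix.mul_diagonal]
    rwa [hent] at hb3
  have besselCol : (∑ i, ∑ j, (d i * K i j) ^ 2) ≤ ∑ j, q j ^ 2 := by
    have hZgram : ((A * U) * Matrix.diagonal d)ᵀ * ((A * U) * Matrix.diagonal d)
        = Matrix.diagonal (fun i => if p i = 0 then (0:ℝ) else 1) := by
      rw [Matrix.transpose_mul, Matrix.diagonal_transpose,
        show Matrix.diagonal d * (A * U)ᵀ * ((A * U) * Matrix.diagonal d)
          = Matrix.diagonal d * ((A * U)ᵀ * (A * U)) * Matrix.diagonal d from by
          simp only [Matrix.mul_assoc], gramA, Matrix.diagonal_mul_diagonal,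
        Matrix.diagonal_mul_diagonal]
      refine congrArg Matrix.diagonal (funext fun i => ?_)
      by_cases h : p i = 0
      · simp [hd_def, h]
      · rw [hd_def]
        simp only [if_neg h]
        field_simp
    have hZnorm : ‖(A * U) * Matrix.diagonal d‖ ≤ 1 :=
      opnorm_le_one_of_gram_diag _ _ (fun i => by by_cases h : p i = 0 <;> simp [h]) hZgram
    have hZtnorm : ‖((A * U) * Matrix.diagonal d)ᵀ‖ ≤ 1 := by
      rw [opnorm_transpose]; exact hZnorm
    have hdK : Matrix.diagonal d * K = ((A * U) * Matrix.diagonal d)ᵀ * (B * V) := by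
      rw [Matrix.transpose_mul (A * U) (Matrix.diagonal d), Matrix.diagonal_transpose, hK_def]
      simp only [Matrix.mul_assoc]
    have hfsqBV : fsq (B * V) = ∑ j, q j ^ 2 := by
      rw [fsq_eq_trace, Matrix.trace_mul_comm, gramB, Matrix.trace_diagonal]
    have hb := frob_mul_left (((A * U) * Matrix.diagonal d)ᵀ) (B * V)
    rw [← hdK, hfsqBV] at hb
    have hb2 : Real.sqrt (fsq (Matrix.diagonal d * K)) ≤ Real.sqrt (∑ j, q j ^ 2) := by
      calc Real.sqrt (fsq (Matrix.diagonal d * K))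
          ≤ ‖((A * U) * Matrix.diagonal d)ᵀ‖ * Real.sqrt (∑ j, q j ^ 2) := hb
        _ ≤ 1 * Real.sqrt (∑ j, q j ^ 2) :=
            mul_le_mul_of_nonneg_right hZtnorm (Real.sqrt_nonneg _)
        _ = Real.sqrt (∑ j, q j ^ 2) := one_mul _
    have hb3 := le_of_sqrt_le_sqrt (fsq_nonneg _)
      (Finset.sum_nonneg fun j _ => sq_nonneg _) hb2
    have hent : fsq (Matrix.diagonal d * K) = ∑ i, ∑ j, (d i * K i j) ^ 2 := by
      unfold fsq
      exact Finset.sum_congr rfl fun i _ => Finset.sum_congr rfl fun j _ => by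
        rw [Matrix.diagonal_mul]
    rwa [hent] at hb3
  -- main trace inequality
  have main : 4 * Matrix.trace (Aᵀ * B)
      ≤ Matrix.trace (P * P) + Matrix.trace (Q * Q) + 2 * Matrix.trace (P * Q) := by
    rw [trAB, trPP, trQQ, trPQ]
    have hterm : ∀ i j, 4 * (K i j * Γ i j)
        ≤ 2 * (p i * q j * (Γ i j) ^ 2) + (d i * K i j) ^ 2 + (K i j * e j) ^ 2 := fun i j =>
      key_scalar (p i) (q j) (Γ i j) (K i j) (d i) (e j) (hpnn i) (hqnn j) (hKent i j) rfl rfl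
    calc 4 * ∑ i, ∑ j, K i j * Γ i j
        = ∑ i, ∑ j, 4 * (K i j * Γ i j) := by
          rw [Finset.mul_sum]
          exact Finset.sum_congr rfl fun i _ => Finset.mul_sum _ _ _
      _ ≤ ∑ i, ∑ j, (2 * (p i * q j * (Γ i j) ^ 2) + (d i * K i j) ^ 2 + (K i j * e j) ^ 2) :=
          Finset.sum_le_sum fun i _ => Finset.sum_le_sum fun j _ => hterm i j
      _ = (∑ i, ∑ j, 2 * (p i * q j * (Γ i j) ^ 2)) + (∑ i, ∑ j, (d i * K i j) ^ 2)
            + (∑ i, ∑ j, (K i j * e j) ^ 2) := by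
          simp only [Finset.sum_add_distrib]
      _ ≤ (∑ i, ∑ j, 2 * (p i * q j * (Γ i j) ^ 2)) + (∑ j, q j ^ 2) + (∑ i, p i ^ 2) := by
          gcongr -- besselCol besselRow
      _ = ∑ i, p i ^ 2 + ∑ j, q j ^ 2 + 2 * ∑ i, ∑ j, p i * q j * Γ i j ^ 2 := by
          rw [show (∑ i, ∑ j, 2 * (p i * q j * (Γ i j) ^ 2))
              = 2 * ∑ i, ∑ j, p i * q j * (Γ i j) ^ 2 from by
            rw [Finset.mul_sum]
            exact Finset.sum_congr rfl fun i _ => (Finset.mul_sum _ _ _).symm]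
          ring
  -- expansions of Frobenius norms
  have step1 : fsq (P - Q)
      = Matrix.trace (P * P) + Matrix.trace (Q * Q) - 2 * Matrix.trace (P * Q) := by
    rw [fsq_eq_trace, Matrix.transpose_sub, hPt, hQt, Matrix.sub_mul, Matrix.mul_sub,
      Matrix.mul_sub, Matrix.trace_sub, Matrix.trace_sub, Matrix.trace_sub,
      Matrix.trace_mul_comm Q P]
    ring
  have step2 : fsq (A - B)
      = Matrix.trace (P * P) + Matrix.trace (Q * Q) - 2 * Matrix.trace (Aᵀ * B) := by
    rw [fsq_eq_trace, Matrix.trace_mul_comm, Matrix.transpose_sub, Matrix.sub_mul,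
      Matrix.mul_sub, Matrix.mul_sub, Matrix.trace_sub, Matrix.trace_sub, Matrix.trace_sub,
      ← hP2, ← hQ2]
    have hBA : Matrix.trace (Bᵀ * A) = Matrix.trace (Aᵀ * B) := by
      rw [← Matrix.trace_transpose (Bᵀ * A), Matrix.transpose_mul, Matrix.transpose_transpose]
    rw [hBA]
    ring
  rw [step1, step2]
  linarith [main]
end aymain

section final
open Matrix
open scoped Matrix.Norms.L2Operator

/-- eigenvalue lower bound for a psd square root -/
lemma rayleigh_sqrt_lb {m : ℕ} {H S : Matrix (Fin m) (Fin m) ℝ} (hS : S.PosSemidef)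
    (hSsq : S * S = H) {c : ℝ} (hc : 0 ≤ c)
    (hlb : ∀ v : Fin m → ℝ, c ^ 2 * (v ⬝ᵥ v) ≤ v ⬝ᵥ (H *ᵥ v)) :
    ∀ i, c ≤ hS.1.eigenvalues i := by
  intro i
  have hnorm : ‖hS.1.eigenvectorBasis i‖ = 1 := hS.1.eigenvectorBasis.orthonormal.1 i
  have h1 := (euc_norm_eq (hS.1.eigenvectorBasis i)).symm
  rw [hnorm] at h1
  have hdot : (hS.1.eigenvectorBasis i : Fin m → ℝ) ⬝ᵥ (hS.1.eigenvectorBasis i : Fin m → ℝ)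
      = 1 := by
    nlinarith [Real.sq_sqrt (dot_self_nonneg (hS.1.eigenvectorBasis i : Fin m → ℝ)), h1]
  set u : Fin m → ℝ := (hS.1.eigenvectorBasis i : Fin m → ℝ) with hu
  set ν : ℝ := hS.1.eigenvalues i with hν
  have hmv : S *ᵥ u = ν • u := hS.1.mulVec_eigenvectorBasis i
  have hH : H *ᵥ u = (ν * ν) • u := by
    rw [← hSsq, ← Matrix.mulVec_mulVec, hmv, Matrix.mulVec_smul, hmv, smul_smul]
  have key := hlb u
  rw [hH, dotProduct_smul, hdot] at key
  have hνnn : 0 ≤ ν := hS.eigenvalues_nonneg i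
  simp only [smul_eq_mul, mul_one] at key
  nlinarith [key, hνnn, hc]

/-- positive-definiteness from a Rayleigh lower bound -/
lemma posdef_of_rayleigh {m : ℕ} {H : Matrix (Fin m) (Fin m) ℝ} (hH : H.IsHermitian)
    {c : ℝ} (hc : 0 < c) (hlb : ∀ v : Fin m → ℝ, c * (v ⬝ᵥ v) ≤ v ⬝ᵥ (H *ᵥ v)) :
    H.PosDef := by
  refine Matrix.PosDef.of_dotProduct_mulVec_pos hH fun x hx => ?_
  have h1 : 0 < x ⬝ᵥ x := by
    have h2 := dotProduct_star_self_pos_iff (R := ℝ) (v := x) |>.mpr hx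
    simpa using h2
  have := hlb x
  have hsx : (star x : Fin m → ℝ) = x := by simp
  rw [hsx]
  nlinarith [this, h1]

end final

section singval
open scoped Matrix.Norms.L2Operator

lemma specNorm_eq {a b : ℕ} (X : Matrix (Fin a) (Fin b) ℝ) : specNorm X = ‖X‖ := rfl

lemma frobNorm_eq {a b : ℕ} (X : Matrix (Fin a) (Fin b) ℝ) :
    frobNorm X = Real.sqrt (fsq X) := rfl

lemma singVal_zero {L : ℕ} (X : Matrix (Fin L) (Fin 0) ℝ) : singVal X 0 = 0 := by
  simp [singVal]

lemma singVal_facts {L M : ℕ} (hM : 0 < M) (X : Matrix (Fin L) (Fin M) ℝ) :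
    (∃ i, singVal X M
        = Real.sqrt ((Matrix.isHermitian_transpose_mul_self X).eigenvalues i)) ∧
    ∀ i, singVal X M
        ≤ Real.sqrt ((Matrix.isHermitian_transpose_mul_self X).eigenvalues i) := by
  classical
  set f : Fin M → ℝ :=
    fun i => Real.sqrt ((Matrix.isHermitian_transpose_mul_self X).eigenvalues i) with hf
  set ms : Multiset ℝ := (Finset.univ : Finset (Fin M)).val.map f with hms
  set l : List ℝ := ms.sort (· ≤ ·) with hl
  have hlen : l.length = M := by
    rw [hl, Multiset.length_sort, hms, Multiset.card_map]
    simp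
  have hsv : singVal X M = l.getD 0 0 := by
    rw [singVal, Nat.sub_self]
  have hsorted : l.Pairwise (· ≤ ·) := Multiset.pairwise_sort _ _
  obtain ⟨a, t, hat⟩ : ∃ a t, l = a :: t := by
    cases hlist : l with
    | nil => rw [hlist] at hlen; simp at hlen; omega
    | cons a t => exact ⟨a, t, rfl⟩
  have hgetd : singVal X M = a := by rw [hsv, hat]; rfl
  rw [hat] at hsorted
  have hcons := List.pairwise_cons.mp hsorted
  constructor
  · have hmem : a ∈ ms := by
      rw [← Multiset.mem_sort (· ≤ ·), ← hl, hat]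
      exact List.mem_cons_self (a := a) (l := t)
    rw [hms] at hmem
    obtain ⟨i, _, hi⟩ := Multiset.mem_map.mp hmem
    exact ⟨i, by rw [hgetd, ← hi]⟩
  · intro i
    have hmem : f i ∈ ms := by
      rw [hms]
      exact Multiset.mem_map_of_mem f (Finset.mem_univ_val i)
    rw [← Multiset.mem_sort (· ≤ ·), ← hl, hat] at hmem
    rw [hgetd]
    rcases List.mem_cons.mp hmem with h | h
    · exact le_of_eq h.symm
    · exact hcons.1 _ h
end singval

theorem Matrix.PosSemidef.sqrt_mul_self {n : Type*} [Fintype n] [DecidableEq n]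
    {A : Matrix n n ℝ} (hA : A.PosSemidef) : hA.sqrt * hA.sqrt = A := by
  have key : ∀ (U D : Matrix n n ℝ), star U * U = 1 →
      U * D * star U * (U * D * star U) = U * (D * D) * star U := by
    intro U D h; simp only [Matrix.mul_assoc]; rw [← Matrix.mul_assoc (star U) U, h, Matrix.one_mul]
  unfold Matrix.PosSemidef.sqrt
  rw [key _ _ (Unitary.coe_star_mul_self _), diagonal_mul_diagonal]
  conv_rhs => rw [hA.1.spectral_theorem, Unitary.conjStarAlgAut_apply]
  congr 2
  congr 1
  funext i
  simp [Real.mul_self_sqrt (hA.eigenvalues_nonneg i)]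

theorem Matrix.PosSemidef.posSemidef_sqrt {n : Type*} [Fintype n] [DecidableEq n]
    {A : Matrix n n ℝ} (hA : A.PosSemidef) : hA.sqrt.PosSemidef := by
  unfold Matrix.PosSemidef.sqrt
  rw [Matrix.star_eq_conjTranspose]
  refine (Matrix.PosSemidef.diagonal fun i => ?_).mul_mul_conjTranspose_same _
  simpa using Real.sqrt_nonneg (hA.1.eigenvalues i)

section mainthm
open Matrix
open scoped Matrix.Norms.L2Operator

lemma dot_triangle_lower {n : ℕ} (x y : Fin n → ℝ) :
    Real.sqrt (x ⬝ᵥ x) - Real.sqrt (y ⬝ᵥ y) ≤ Real.sqrt ((x + y) ⬝ᵥ (x + y)) := by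
  set a : EuclideanSpace ℝ (Fin n) := (WithLp.equiv 2 (Fin n → ℝ)).symm x with ha
  set b : EuclideanSpace ℝ (Fin n) := (WithLp.equiv 2 (Fin n → ℝ)).symm y with hb
  have h1 : ‖a‖ ≤ ‖a + b‖ + ‖b‖ := by
    have h2 := norm_add_le (a + b) (-b)
    simpa using h2
  have e1 : ‖a‖ = Real.sqrt (x ⬝ᵥ x) := euc_norm_eq a
  have e2 : ‖b‖ = Real.sqrt (y ⬝ᵥ y) := euc_norm_eq b
  have e3 : ‖a + b‖ = Real.sqrt ((x + y) ⬝ᵥ (x + y)) := euc_norm_eq (a + b)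
  rw [e1, e2, e3] at h1
  linarith

lemma fsq_neg {a b : ℕ} (Y : Matrix (Fin a) (Fin b) ℝ) : fsq (-Y) = fsq Y := by
  unfold fsq
  exact Finset.sum_congr rfl fun i _ => Finset.sum_congr rfl fun j _ => by
    rw [Matrix.neg_apply]; ring

/-- Perturbation bound for `Πₒ` under an additive perturbation that is
smaller than the smallest singular value. -/
theorem stmt11 {L M : ℕ} (hLM : M ≤ L) (X Y : Matrix (Fin L) (Fin M) ℝ)
    (h : specNorm Y < singVal X M) :
    IsUnit (Xᵀ * X) ∧ IsUnit ((X + Y)ᵀ * (X + Y)) ∧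
      frobNorm (Pio (X + Y) - Pio X) ≤
        (1 + Real.sqrt 2) * frobNorm Y / (singVal X M - specNorm Y) := by
  rcases Nat.eq_zero_or_pos M with hM0 | hM
  · exfalso
    subst hM0
    rw [singVal_zero X] at h
    have := norm_nonneg Y
    rw [← specNorm_eq] at this
    linarith
  -- notation
  have hH : (Xᵀ * X).IsHermitian := Matrix.isHermitian_transpose_mul_self X
  set σ : ℝ := singVal X M with hσ_def
  set ε : ℝ := specNorm Y with hε_def
  have hε_norm : ε = ‖Y‖ := rfl
  have hε0 : 0 ≤ ε := by rw [hε_norm]; exact norm_nonneg Y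
  obtain ⟨⟨i0, hi0⟩, hle⟩ := singVal_facts hM X
  have hσ0 : 0 ≤ σ := by rw [hσ_def, hi0]; exact Real.sqrt_nonneg _
  have hσpos : 0 < σ := lt_of_le_of_lt hε0 h
  have hσε : 0 < σ - ε := by rw [hσ_def, hε_def]; linarith [h]
  -- psd of gram matrices
  have hHpsd : (Xᵀ * X).PosSemidef := by
    have := Matrix.posSemidef_conjTranspose_mul_self X
    rwa [Matrix.conjTranspose_eq_transpose_of_trivial] at this
  have heig_nonneg : ∀ i, 0 ≤ hH.eigenvalues i := fun i => hHpsd.eigenvalues_nonneg i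
  have heig_lb : ∀ i, σ ^ 2 ≤ hH.eigenvalues i := by
    intro i
    have h1 := hle i
    nlinarith [Real.sq_sqrt (heig_nonneg i), Real.sqrt_nonneg (hH.eigenvalues i), hσ0]
  have hXlb : ∀ v : Fin M → ℝ, σ ^ 2 * (v ⬝ᵥ v) ≤ v ⬝ᵥ ((Xᵀ * X) *ᵥ v) :=
    rayleigh_lb hH heig_lb
  have hXpd : (Xᵀ * X).PosDef := posdef_of_rayleigh hH (by positivity) hXlb
  -- perturbed gram
  have hHB : ((X + Y)ᵀ * (X + Y)).IsHermitian := Matrix.isHermitian_transpose_mul_self (X + Y)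
  have hBpsd : ((X + Y)ᵀ * (X + Y)).PosSemidef := by
    have := Matrix.posSemidef_conjTranspose_mul_self (X + Y)
    rwa [Matrix.conjTranspose_eq_transpose_of_trivial] at this
  have hBlb : ∀ v : Fin M → ℝ, (σ - ε) ^ 2 * (v ⬝ᵥ v) ≤ v ⬝ᵥ (((X + Y)ᵀ * (X + Y)) *ᵥ v) := by
    intro v
    rw [← dot_self_mulVec]
    have hXv : σ * Real.sqrt (v ⬝ᵥ v) ≤ Real.sqrt ((X *ᵥ v) ⬝ᵥ (X *ᵥ v)) := by
      have h1 := hXlb v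
      rw [← dot_self_mulVec] at h1
      have h2 : Real.sqrt (σ ^ 2 * (v ⬝ᵥ v)) ≤ Real.sqrt ((X *ᵥ v) ⬝ᵥ (X *ᵥ v)) :=
        Real.sqrt_le_sqrt h1
      rwa [Real.sqrt_mul (by positivity), Real.sqrt_sq hσ0] at h2
    have hYv : Real.sqrt ((Y *ᵥ v) ⬝ᵥ (Y *ᵥ v)) ≤ ε * Real.sqrt (v ⬝ᵥ v) := by
      have h1 := dot_mulVec_le_opnorm Y v
      have h2 : Real.sqrt ((Y *ᵥ v) ⬝ᵥ (Y *ᵥ v)) ≤ Real.sqrt (‖Y‖ ^ 2 * (v ⬝ᵥ v)) :=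
        Real.sqrt_le_sqrt h1
      rwa [Real.sqrt_mul (by positivity), Real.sqrt_sq (norm_nonneg Y), ← hε_norm] at h2
    have htri := dot_triangle_lower (X *ᵥ v) (Y *ᵥ v)
    rw [← Matrix.add_mulVec] at htri
    have hlower : (σ - ε) * Real.sqrt (v ⬝ᵥ v)
        ≤ Real.sqrt (((X + Y) *ᵥ v) ⬝ᵥ ((X + Y) *ᵥ v)) := by
      have := Real.sqrt_nonneg (v ⬝ᵥ v)
      nlinarith [hXv, hYv, htri]
    have h6 : ((σ - ε) * Real.sqrt (v ⬝ᵥ v)) ^ 2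
        ≤ (Real.sqrt (((X + Y) *ᵥ v) ⬝ᵥ ((X + Y) *ᵥ v))) ^ 2 :=
      pow_le_pow_left₀ (mul_nonneg hσε.le (Real.sqrt_nonneg _)) hlower 2
    rw [mul_pow, Real.sq_sqrt (dot_self_nonneg v),
      Real.sq_sqrt (dot_self_nonneg ((X + Y) *ᵥ v))] at h6
    exact h6
  have hBpd : ((X + Y)ᵀ * (X + Y)).PosDef := posdef_of_rayleigh hHB (by positivity) hBlb
  refine ⟨hXpd.isUnit, hBpd.isUnit, ?_⟩
  -- square roots
  set S : Matrix (Fin M) (Fin M) ℝ := matSqrt (Xᵀ * X) with hS_def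
  set T : Matrix (Fin M) (Fin M) ℝ := matSqrt ((X + Y)ᵀ * (X + Y)) with hT_def
  have hSsqrt : S = hHpsd.sqrt := by rw [hS_def, matSqrt, dif_pos hHpsd]
  have hTsqrt : T = hBpsd.sqrt := by rw [hT_def, matSqrt, dif_pos hBpsd]
  have hS : S.PosSemidef := by rw [hSsqrt]; exact hHpsd.posSemidef_sqrt
  have hT : T.PosSemidef := by rw [hTsqrt]; exact hBpsd.posSemidef_sqrt
  have hSsq : S * S = Xᵀ * X := by rw [hSsqrt]; exact hHpsd.sqrt_mul_self
  have hTsq : T * T = (X + Y)ᵀ * (X + Y) := by rw [hTsqrt]; exact hBpsd.sqrt_mul_self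
  have hSt : Sᵀ = S := by
    rw [← Matrix.conjTranspose_eq_transpose_of_trivial]; exact hS.1
  have hTt : Tᵀ = T := by
    rw [← Matrix.conjTranspose_eq_transpose_of_trivial]; exact hT.1
  have hSpd : S.PosDef := posdef_of_rayleigh hS.1 hσpos
    (rayleigh_lb hS.1 (rayleigh_sqrt_lb hS hSsq hσ0 hXlb))
  have hTpd : T.PosDef := posdef_of_rayleigh hT.1 hσε
    (rayleigh_lb hT.1 (rayleigh_sqrt_lb hT hTsq hσε.le hBlb))
  have hSdet : IsUnit S.det := (Matrix.isUnit_iff_isUnit_det S).mp hSpd.isUnit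
  have hTdet : IsUnit T.det := (Matrix.isUnit_iff_isUnit_det T).mp hTpd.isUnit
  have hSinvS : S⁻¹ * S = 1 := Matrix.nonsing_inv_mul S hSdet
  have hSSinv : S * S⁻¹ = 1 := Matrix.mul_nonsing_inv S hSdet
  have hTTinv : T * T⁻¹ = 1 := Matrix.mul_nonsing_inv T hTdet
  -- operator norm bounds
  have hTinv_norm : ‖T⁻¹‖ ≤ (σ - ε)⁻¹ := by
    refine opnorm_le_of_dot _ (inv_nonneg.mpr hσε.le) fun v => ?_
    set w : Fin M → ℝ := T⁻¹ *ᵥ v with hw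
    have h1 : T *ᵥ w = v := by
      rw [hw, Matrix.mulVec_mulVec, hTTinv, Matrix.one_mulVec]
    have h2 := hBlb w
    rw [← hTsq] at h2
    have h3 : w ⬝ᵥ ((T * T) *ᵥ w) = (T *ᵥ w) ⬝ᵥ (T *ᵥ w) := by
      rw [dot_self_mulVec T w, hTt]
    rw [h3, h1] at h2
    have hinv : (σ - ε) * (σ - ε)⁻¹ = 1 := mul_inv_cancel₀ (ne_of_gt hσε)
    have h4 := mul_le_mul_of_nonneg_left h2 (sq_nonneg ((σ - ε)⁻¹))
    have h5 : ((σ - ε)⁻¹) ^ 2 * ((σ - ε) ^ 2 * (w ⬝ᵥ w)) = w ⬝ᵥ w := by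
      field_simp
    rw [h5] at h4
    exact h4
  have hQgram : (X * S⁻¹)ᵀ * (X * S⁻¹) = 1 := by
    rw [Matrix.transpose_mul, Matrix.transpose_nonsing_inv, hSt]
    calc S⁻¹ * Xᵀ * (X * S⁻¹) = S⁻¹ * (Xᵀ * X) * S⁻¹ := by simp only [Matrix.mul_assoc]
      _ = S⁻¹ * (S * S) * S⁻¹ := by rw [hSsq]
      _ = (S⁻¹ * S) * (S * S⁻¹) := by simp only [Matrix.mul_assoc]
      _ = 1 := by rw [hSinvS, hSSinv, Matrix.one_mul]
  have hQnorm : ‖X * S⁻¹‖ ≤ 1 := by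
    refine opnorm_le_of_dot _ zero_le_one fun v => ?_
    rw [dot_self_mulVec, hQgram, Matrix.one_mulVec]
    nlinarith [dot_self_nonneg v]
  -- the algebraic identity
  have hkey : Pio (X + Y) - Pio X = (Y + (X * S⁻¹) * (S - T)) * T⁻¹ := by
    have hPioX : Pio X = X * S⁻¹ := by rw [hS_def]; rfl
    have hPioB : Pio (X + Y) = (X + Y) * T⁻¹ := by rw [hT_def]; rfl
    have hrhs : (Y + (X * S⁻¹) * (S - T)) * T⁻¹ = (X + Y) * T⁻¹ - X * S⁻¹ := by
      calc (Y + (X * S⁻¹) * (S - T)) * T⁻¹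
          = Y * T⁻¹ + ((X * S⁻¹ * S) * T⁻¹ - (X * S⁻¹) * (T * T⁻¹)) := by
            rw [Matrix.mul_sub, Matrix.add_mul, Matrix.sub_mul,
              Matrix.mul_assoc (X * S⁻¹) T T⁻¹]
        _ = Y * T⁻¹ + (X * T⁻¹ - X * S⁻¹) := by
            rw [Matrix.mul_assoc X S⁻¹ S, hSinvS, Matrix.mul_one, hTTinv, Matrix.mul_one]
        _ = (X + Y) * T⁻¹ - X * S⁻¹ := by rw [Matrix.add_mul]; abel
    rw [hrhs, hPioX, hPioB]
  -- AY bound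
  have hAY : fsq (S - T) ≤ 2 * fsq Y := by
    have h1 := ay_main X (X + Y) hS hT hSsq hTsq
    have h2 : X - (X + Y) = -Y := by abel
    rwa [h2, fsq_neg] at h1
  have hST : Real.sqrt (fsq (S - T)) ≤ Real.sqrt 2 * Real.sqrt (fsq Y) := by
    calc Real.sqrt (fsq (S - T)) ≤ Real.sqrt (2 * fsq Y) := Real.sqrt_le_sqrt hAY
      _ = Real.sqrt 2 * Real.sqrt (fsq Y) := Real.sqrt_mul (by norm_num) _
  -- final chain
  set a : ℝ := Real.sqrt (fsq Y) with ha_def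
  have ha0 : 0 ≤ a := Real.sqrt_nonneg _
  have c1 := frob_mul_right (Y + (X * S⁻¹) * (S - T)) T⁻¹
  have c2 := frob_triangle Y ((X * S⁻¹) * (S - T))
  have c3 := frob_mul_left (X * S⁻¹) (S - T)
  have c4 : Real.sqrt (fsq ((X * S⁻¹) * (S - T))) ≤ Real.sqrt 2 * a := by
    calc Real.sqrt (fsq ((X * S⁻¹) * (S - T))) ≤ ‖X * S⁻¹‖ * Real.sqrt (fsq (S - T)) := c3
      _ ≤ 1 * (Real.sqrt 2 * a) := by
          apply mul_le_mul hQnorm hST (Real.sqrt_nonneg _) zero_le_one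
      _ = Real.sqrt 2 * a := one_mul _
  have c5 : Real.sqrt (fsq (Y + (X * S⁻¹) * (S - T))) ≤ a + Real.sqrt 2 * a := by
    calc Real.sqrt (fsq (Y + (X * S⁻¹) * (S - T)))
        ≤ a + Real.sqrt (fsq ((X * S⁻¹) * (S - T))) := c2
      _ ≤ a + Real.sqrt 2 * a := by linarith [c4]
  have c6 : frobNorm (Pio (X + Y) - Pio X) ≤ (a + Real.sqrt 2 * a) * (σ - ε)⁻¹ := by
    rw [hkey, frobNorm_eq]
    calc Real.sqrt (fsq ((Y + (X * S⁻¹) * (S - T)) * T⁻¹))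
        ≤ Real.sqrt (fsq (Y + (X * S⁻¹) * (S - T))) * ‖T⁻¹‖ := c1
      _ ≤ (a + Real.sqrt 2 * a) * (σ - ε)⁻¹ := by
          apply mul_le_mul c5 hTinv_norm (norm_nonneg _)
          positivity
  have hfrobY : frobNorm Y = a := rfl
  rw [hfrobY]
  calc frobNorm (Pio (X + Y) - Pio X) ≤ (a + Real.sqrt 2 * a) * (σ - ε)⁻¹ := c6
    _ = (1 + Real.sqrt 2) * a / (σ - ε) := by rw [div_eq_mul_inv]; ring
end mainthm
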